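/- arXiv:2009.12820 — 2 statements merged into one kernel-verified Lean document; each statement's English description precedes it below -/
import Mathlib

section
/- Let M ∈ ℝ^{d×d} be symmetric positive semidefinite, C ∈ ℝ^{d×d} positive semidefinite, λ > 0, t ≥ 0, and define φ̄_{λ,t}(M) = ‖C^{1/2}(I − (M+λI)⁻¹M)‖_F² + t·Tr(C(M+λI)⁻²M). Then φ̄_{λ,t}(M) ≤ (λ + t)·Tr(C(M+λI)⁻¹). -/
open Matrix

noncomputable section

lemma psd_trace_nonneg {d : ℕ} {P : Matrix (Fin d) (Fin d) ℝ} (hP : P.PosSemidef) :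
    0 ≤ Matrix.trace P := by
  apply Finset.sum_nonneg
  intro i _
  have := hP.dotProduct_mulVec_nonneg (Pi.single i 1)
  simpa [dotProduct, Matrix.mulVec, Pi.single_apply, Finset.mul_sum] using this

lemma sum_sq_eq_trace {d : ℕ} (X : Matrix (Fin d) (Fin d) ℝ) :
    ∑ i, ∑ j, (X i j) ^ 2 = Matrix.trace (Xᵀ * X) := by
  simp only [Matrix.trace, Matrix.diag, Matrix.mul_apply, Matrix.transpose_apply, sq]
  exact Finset.sum_comm

theorem phibar_le_transductive {d : ℕ}
    (M C Csqrt : Matrix (Fin d) (Fin d) ℝ) (hM : M.PosSemidef) (hC : C.PosSemidef)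
    (hsq : Csqrt * Csqrt = C) (hsym : Csqrtᵀ = Csqrt)
    (lam t : ℝ) (hlam : 0 < lam) (ht : 0 ≤ t) :
    (∑ i, ∑ j, ((Csqrt * (1 - (M + lam • 1)⁻¹ * M)) i j) ^ 2)
      + t * Matrix.trace (C * ((M + lam • 1)⁻¹ * (M + lam • 1)⁻¹ * M))
      ≤ (lam + t) * Matrix.trace (C * (M + lam • 1)⁻¹) := by
  set A := M + lam • (1 : Matrix (Fin d) (Fin d) ℝ) with hA
  have hsmul : (lam • (1 : Matrix (Fin d) (Fin d) ℝ)).PosDef := by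
    refine Matrix.PosDef.of_dotProduct_mulVec_pos ?_ (fun x hx => ?_)
    · simp [Matrix.IsHermitian]
    · simp only [Matrix.smul_mulVec, Matrix.one_mulVec, dotProduct_smul]
      have : 0 < star x ⬝ᵥ x := by
        have hx' : x ≠ 0 := hx
        rw [show (star x ⬝ᵥ x) = ∑ i, x i * x i by simp [dotProduct, mul_comm]]
        obtain ⟨i, hi⟩ := Function.ne_iff.mp hx'
        exact Finset.sum_pos' (fun j _ => mul_self_nonneg _) ⟨i, Finset.mem_univ i, mul_self_pos.mpr hi⟩
      exact smul_pos hlam this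
  have hApd : A.PosDef := Matrix.PosDef.posSemidef_add hM hsmul
  have hU : IsUnit A.det := (Matrix.isUnit_iff_isUnit_det A).mp hApd.isUnit
  have hAinv : A⁻¹ * A = 1 := Matrix.nonsing_inv_mul A hU
  have hAinv' : A * A⁻¹ = 1 := Matrix.mul_nonsing_inv A hU
  have hAsym : Aᵀ = A := by
    have := hM.isHermitian
    rw [hA]
    simp [Matrix.transpose_add, Matrix.transpose_smul]
    exact this
  have hAinvsym : A⁻¹ᵀ = A⁻¹ := by rw [Matrix.transpose_nonsing_inv, hAsym]
  have hcommMA : M * A = A * M := by rw [hA]; noncomm_ring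
  have hcomm : A⁻¹ * M = M * A⁻¹ := by
    calc A⁻¹ * M = A⁻¹ * M * (A * A⁻¹) := by rw [hAinv', mul_one]
    _ = A⁻¹ * (M * A) * A⁻¹ := by noncomm_ring
    _ = A⁻¹ * (A * M) * A⁻¹ := by rw [hcommMA]
    _ = (A⁻¹ * A) * (M * A⁻¹) := by noncomm_ring
    _ = M * A⁻¹ := by rw [hAinv, one_mul]
  have h1 : (1 : Matrix (Fin d) (Fin d) ℝ) - A⁻¹ * M = lam • A⁻¹ := by
    calc (1 : Matrix (Fin d) (Fin d) ℝ) - A⁻¹ * M = A⁻¹ * A - A⁻¹ * M := by rw [hAinv]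
    _ = A⁻¹ * (A - M) := by rw [Matrix.mul_sub]
    _ = A⁻¹ * (lam • 1) := by rw [hA, add_sub_cancel_left]
    _ = lam • A⁻¹ := by rw [Matrix.mul_smul, mul_one]
  -- Frobenius term
  have hfro : (∑ i, ∑ j, ((Csqrt * (1 - A⁻¹ * M)) i j) ^ 2)
      = lam ^ 2 * Matrix.trace (C * (A⁻¹ * A⁻¹)) := by
    rw [h1, sum_sq_eq_trace]
    rw [Matrix.mul_smul, Matrix.transpose_smul, Matrix.transpose_mul, hAinvsym, hsym]
    rw [smul_mul_smul_comm, Matrix.trace_smul, smul_eq_mul, ← sq]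
    congr 1
    calc Matrix.trace (A⁻¹ * Csqrt * (Csqrt * A⁻¹))
        = Matrix.trace (A⁻¹ * (C * A⁻¹)) := by
          rw [show A⁻¹ * Csqrt * (Csqrt * A⁻¹) = A⁻¹ * ((Csqrt * Csqrt) * A⁻¹) by
            noncomm_ring, hsq]
      _ = Matrix.trace ((C * A⁻¹) * A⁻¹) := Matrix.trace_mul_comm _ _
      _ = Matrix.trace (C * (A⁻¹ * A⁻¹)) := by rw [Matrix.mul_assoc]
  rw [hfro]
  -- difference is trace of C times PSD matrix
  have hkey : (lam + t) * Matrix.trace (C * A⁻¹)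
      - (lam ^ 2 * Matrix.trace (C * (A⁻¹ * A⁻¹)) + t * Matrix.trace (C * (A⁻¹ * A⁻¹ * M)))
      = lam * Matrix.trace (C * (A⁻¹ * (M + t • 1) * A⁻¹)) := by
    have hexp : A⁻¹ * (M + t • 1) * A⁻¹
        = (1/lam) • ((lam + t) • A⁻¹ - lam ^ 2 • (A⁻¹ * A⁻¹) - t • (A⁻¹ * A⁻¹ * M)) := by
      have : lam • (A⁻¹ * (M + t • 1) * A⁻¹)
          = (lam + t) • A⁻¹ - lam ^ 2 • (A⁻¹ * A⁻¹) - t • (A⁻¹ * A⁻¹ * M) := by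
        have e1 : (lam + t) • A⁻¹ = A⁻¹ * ((lam + t) • A) * A⁻¹ := by
          rw [Matrix.mul_smul, Matrix.smul_mul, Matrix.mul_assoc]
          rw [show A * A⁻¹ = 1 from hAinv', mul_one]
        have e2 : lam ^ 2 • (A⁻¹ * A⁻¹) = A⁻¹ * (lam ^ 2 • (1:Matrix (Fin d) (Fin d) ℝ)) * A⁻¹ := by
          rw [Matrix.mul_smul, mul_one, Matrix.smul_mul]
        have e3 : t • (A⁻¹ * A⁻¹ * M) = A⁻¹ * (t • M) * A⁻¹ := by
          have hx : A⁻¹ * A⁻¹ * M = A⁻¹ * M * A⁻¹ := by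
            conv_lhs => rw [Matrix.mul_assoc, hcomm]
            rw [← Matrix.mul_assoc]
          rw [hx, Matrix.mul_smul, Matrix.smul_mul]
        have hmid : (lam + t) • A - lam ^ 2 • (1 : Matrix (Fin d) (Fin d) ℝ) - t • M
            = lam • (M + t • 1) := by rw [hA]; module
        rw [e1, e2, e3, ← Matrix.sub_mul, ← Matrix.sub_mul, ← Matrix.mul_sub, ← Matrix.mul_sub,
          hmid, Matrix.mul_smul, Matrix.smul_mul]
      rw [← this, smul_smul]
      rw [one_div, inv_mul_cancel₀ hlam.ne', one_smul]
    rw [hexp]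
    rw [Matrix.mul_smul, Matrix.trace_smul]
    simp only [Matrix.mul_sub, Matrix.mul_smul, Matrix.trace_sub, Matrix.trace_smul]
    field_simp
    have hl : lam * lam⁻¹ = 1 := mul_inv_cancel₀ hlam.ne'
    linear_combination (-(t * (C * A⁻¹).trace) + t * (C * (A⁻¹ * A⁻¹ * M)).trace - lam * (C * A⁻¹).trace + lam^2 * (C * (A⁻¹ * A⁻¹)).trace) * hl
  have hpsd : (A⁻¹ * (M + t • 1) * A⁻¹).PosSemidef := by
    have hMt : (M + t • (1:Matrix (Fin d) (Fin d) ℝ)).PosSemidef := by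
      refine hM.add ?_
      refine Matrix.PosSemidef.of_dotProduct_mulVec_nonneg ?_ (fun x => ?_)
      · simp [Matrix.IsHermitian]
      · simp only [Matrix.smul_mulVec, Matrix.one_mulVec, dotProduct_smul]
        refine smul_nonneg ht ?_
        rw [show (star x ⬝ᵥ x) = ∑ i, x i * x i by simp [dotProduct, mul_comm]]
        exact Finset.sum_nonneg fun i _ => mul_self_nonneg _
    have := hMt.mul_mul_conjTranspose_same A⁻¹
    rw [Matrix.conjTranspose_eq_transpose_of_trivial, hAinvsym] at this
    exact this
  have htr : 0 ≤ Matrix.trace (C * (A⁻¹ * (M + t • 1) * A⁻¹)) := by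
    have h2 : Matrix.trace (C * (A⁻¹ * (M + t • 1) * A⁻¹))
        = Matrix.trace (Csqrt * (A⁻¹ * (M + t • 1) * A⁻¹) * Csqrt) := by
      rw [← hsq, Matrix.mul_assoc, Matrix.trace_mul_comm]
    rw [h2]
    refine psd_trace_nonneg ?_
    have hpsd2 := hpsd.mul_mul_conjTranspose_same Csqrt
    have hct : Csqrtᴴ = Csqrt := by
      have h3 : Csqrtᴴ = Csqrtᵀ := by
        ext i j
        simp [Matrix.conjTranspose_apply, Matrix.transpose_apply]
      rw [h3, hsym]
    rwa [hct] at hpsd2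
  linarith [mul_nonneg hlam.le htr, hkey]
end
end

section
/- Let V ∈ ℝ^{m×d}, K = VVᵀ, and S ⊆ [m] with K_{S,S} + λI invertible, λ ≥ 0. With M = V_SᵀV_S and M_λ = M + λI_d, the quantity ‖V(I_d − M_λ^+M)‖_F² + t·Tr(V M_λ^{+2} M Vᵀ) equals Tr(K) + J, where J = Tr(K_{:,S}[(K_{S,S}+λI)⁻¹(−2I + K_{S,S}(K_{S,S}+λI)⁻¹) + t(K_{S,S}+λI)⁻²] K_{:,S}ᵀ). -/
open Matrix Classical

noncomputable section

/-- `B` satisfies the four Penrose conditions for `A`. -/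
def IsMoorePenrose {m n : ℕ} (A : Matrix (Fin m) (Fin n) ℝ)
    (B : Matrix (Fin n) (Fin m) ℝ) : Prop :=
  A * B * A = A ∧ B * A * B = B ∧ (A * B)ᵀ = A * B ∧ (B * A)ᵀ = B * A

/-- The Moore–Penrose pseudoinverse of a real matrix. -/
def pinv {m n : ℕ} (A : Matrix (Fin m) (Fin n) ℝ) : Matrix (Fin n) (Fin m) ℝ :=
  if h : ∃ B, IsMoorePenrose A B then h.choose else 0

lemma mp_unique {m n : ℕ} {A : Matrix (Fin m) (Fin n) ℝ} {B C : Matrix (Fin n) (Fin m) ℝ}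
    (hB : IsMoorePenrose A B) (hC : IsMoorePenrose A C) : B = C := by
  obtain ⟨hB1, hB2, hB3, hB4⟩ := hB
  obtain ⟨hC1, hC2, hC3, hC4⟩ := hC
  have hAB : A * B = A * C := by
    calc A * B = (A * B)ᵀ := hB3.symm
    _ = (A * C * A * B)ᵀ := by rw [hC1]
    _ = ((A * C) * (A * B))ᵀ := by rw [Matrix.mul_assoc (A * C) A B]
    _ = (A * B)ᵀ * (A * C)ᵀ := Matrix.transpose_mul _ _
    _ = (A * B) * (A * C) := by rw [hB3, hC3]
    _ = (A * B * A) * C := (Matrix.mul_assoc (A * B) A C).symm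
    _ = A * C := by rw [hB1]
  have hBA : B * A = C * A := by
    calc B * A = (B * A)ᵀ := hB4.symm
    _ = (B * (A * C * A))ᵀ := by rw [hC1]
    _ = ((B * (A * C)) * A)ᵀ := by rw [Matrix.mul_assoc B (A * C) A]
    _ = Aᵀ * (B * (A * C))ᵀ := Matrix.transpose_mul _ _
    _ = Aᵀ * ((B * A) * C)ᵀ := by rw [Matrix.mul_assoc B A C]
    _ = Aᵀ * (Cᵀ * (B * A)ᵀ) := by rw [Matrix.transpose_mul (B * A) C]
    _ = (Aᵀ * Cᵀ) * (B * A)ᵀ := (Matrix.mul_assoc _ _ _).symm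
    _ = (C * A)ᵀ * (B * A)ᵀ := by rw [← Matrix.transpose_mul C A]
    _ = (C * A) * (B * A) := by rw [hC4, hB4]
    _ = C * (A * B * A) := by rw [Matrix.mul_assoc C A (B * A), ← Matrix.mul_assoc A B A]
    _ = C * A := by rw [hB1]
  calc B = B * A * B := hB2.symm
  _ = B * (A * C) := by rw [Matrix.mul_assoc, hAB]
  _ = (C * A) * C := by rw [← Matrix.mul_assoc, hBA]
  _ = C := hC2

lemma pinv_eq {m n : ℕ} {A : Matrix (Fin m) (Fin n) ℝ} {B : Matrix (Fin n) (Fin m) ℝ}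
    (h : IsMoorePenrose A B) : pinv A = B := by
  have hex : ∃ B, IsMoorePenrose A B := ⟨B, h⟩
  rw [pinv, dif_pos hex]
  exact mp_unique hex.choose_spec h

lemma mp_of_inv {n : ℕ} {A B : Matrix (Fin n) (Fin n) ℝ} (h1 : A * B = 1) (h2 : B * A = 1) :
    IsMoorePenrose A B :=
  ⟨by rw [h1, one_mul], by rw [h2, one_mul], by rw [h1, Matrix.transpose_one],
   by rw [h2, Matrix.transpose_one]⟩

lemma mp_zero {s d : ℕ} (W : Matrix (Fin s) (Fin d) ℝ)
    (hdet : IsUnit (W * Wᵀ).det) :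
    IsMoorePenrose (Wᵀ * W) (Wᵀ * ((W * Wᵀ)⁻¹ * ((W * Wᵀ)⁻¹ * W))) := by
  have hG1 : (W * Wᵀ) * (W * Wᵀ)⁻¹ = 1 := Matrix.mul_nonsing_inv _ hdet
  have hG2 : (W * Wᵀ)⁻¹ * (W * Wᵀ) = 1 := Matrix.nonsing_inv_mul _ hdet
  have hGT : (W * Wᵀ)ᵀ = W * Wᵀ := by rw [Matrix.transpose_mul, Matrix.transpose_transpose]
  have hGiT : ((W * Wᵀ)⁻¹)ᵀ = (W * Wᵀ)⁻¹ := by rw [Matrix.transpose_nonsing_inv, hGT]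
  have k1 : ∀ {n : ℕ} (X : Matrix (Fin s) (Fin n) ℝ), W * (Wᵀ * ((W * Wᵀ)⁻¹ * X)) = X := by
    intro n X
    rw [← Matrix.mul_assoc, ← Matrix.mul_assoc, hG1, Matrix.one_mul]
  have k2 : ∀ {n : ℕ} (X : Matrix (Fin s) (Fin n) ℝ), (W * Wᵀ)⁻¹ * (W * (Wᵀ * X)) = X := by
    intro n X
    rw [← Matrix.mul_assoc, ← Matrix.mul_assoc, Matrix.mul_assoc (W * Wᵀ)⁻¹ W Wᵀ, hG2,
      Matrix.one_mul]
  have hAB : (Wᵀ * W) * (Wᵀ * ((W * Wᵀ)⁻¹ * ((W * Wᵀ)⁻¹ * W))) = Wᵀ * ((W * Wᵀ)⁻¹ * W) := by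
    simp only [Matrix.mul_assoc]; rw [k1]
  have hBA : (Wᵀ * ((W * Wᵀ)⁻¹ * ((W * Wᵀ)⁻¹ * W))) * (Wᵀ * W) = Wᵀ * ((W * Wᵀ)⁻¹ * W) := by
    simp only [Matrix.mul_assoc]; rw [k2]
  have hsym : (Wᵀ * ((W * Wᵀ)⁻¹ * W))ᵀ = Wᵀ * ((W * Wᵀ)⁻¹ * W) := by
    rw [Matrix.transpose_mul, Matrix.transpose_mul, hGiT, Matrix.transpose_transpose,
      Matrix.mul_assoc]
  refine ⟨?_, ?_, ?_, ?_⟩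
  · simp only [Matrix.mul_assoc]; rw [k1, k2]
  · simp only [Matrix.mul_assoc]; rw [k1, k1]
  · rw [hAB]; exact hsym
  · rw [hBA]; exact hsym

lemma mp_lam {s d : ℕ} (W : Matrix (Fin s) (Fin d) ℝ) {lam : ℝ} (hlam : lam ≠ 0)
    (hdet : IsUnit (W * Wᵀ + lam • (1 : Matrix (Fin s) (Fin s) ℝ)).det) :
    IsMoorePenrose (Wᵀ * W + lam • 1)
      (lam⁻¹ • (1 - Wᵀ * ((W * Wᵀ + lam • 1)⁻¹ * W))) := by
  set N : Matrix (Fin s) (Fin s) ℝ := W * Wᵀ + lam • 1 with hNdef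
  have hN1 : N * N⁻¹ = 1 := Matrix.mul_nonsing_inv _ hdet
  have hN2 : N⁻¹ * N = 1 := Matrix.nonsing_inv_mul _ hdet
  have hpush : (Wᵀ * W + lam • 1) * Wᵀ = Wᵀ * N := by
    rw [hNdef]
    simp only [Matrix.add_mul, Matrix.mul_add, Matrix.smul_mul, Matrix.mul_smul,
      Matrix.one_mul, Matrix.mul_one, Matrix.mul_assoc]
  have hpush' : W * (Wᵀ * W + lam • 1) = N * W := by
    rw [hNdef]
    simp only [Matrix.add_mul, Matrix.mul_add, Matrix.smul_mul, Matrix.mul_smul,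
      Matrix.one_mul, Matrix.mul_one, Matrix.mul_assoc]
  have hA : (Wᵀ * W + lam • 1) - Wᵀ * W = lam • 1 := add_sub_cancel_left _ _
  have h1 : (Wᵀ * W + lam • 1) * (lam⁻¹ • (1 - Wᵀ * (N⁻¹ * W))) = 1 := by
    have e : (Wᵀ * W + lam • 1) * (Wᵀ * (N⁻¹ * W)) = Wᵀ * W := by
      calc (Wᵀ * W + lam • 1) * (Wᵀ * (N⁻¹ * W))
          = ((Wᵀ * W + lam • 1) * Wᵀ) * (N⁻¹ * W) := (Matrix.mul_assoc _ _ _).symm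
      _ = (Wᵀ * N) * (N⁻¹ * W) := by rw [hpush]
      _ = Wᵀ * ((N * N⁻¹) * W) := by
          rw [Matrix.mul_assoc, ← Matrix.mul_assoc N N⁻¹ W]
      _ = Wᵀ * W := by rw [hN1, Matrix.one_mul]
    calc (Wᵀ * W + lam • 1) * (lam⁻¹ • (1 - Wᵀ * (N⁻¹ * W)))
        = lam⁻¹ • ((Wᵀ * W + lam • 1) * 1 - (Wᵀ * W + lam • 1) * (Wᵀ * (N⁻¹ * W))) := by
          rw [Matrix.mul_smul, Matrix.mul_sub]
    _ = lam⁻¹ • ((Wᵀ * W + lam • 1) - Wᵀ * W) := by rw [Matrix.mul_one, e]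
    _ = lam⁻¹ • (lam • (1 : Matrix (Fin d) (Fin d) ℝ)) := by rw [hA]
    _ = 1 := by rw [smul_smul, inv_mul_cancel₀ hlam, one_smul]
  have h2 : (lam⁻¹ • (1 - Wᵀ * (N⁻¹ * W))) * (Wᵀ * W + lam • 1) = 1 := by
    have e : (Wᵀ * (N⁻¹ * W)) * (Wᵀ * W + lam • 1) = Wᵀ * W := by
      calc (Wᵀ * (N⁻¹ * W)) * (Wᵀ * W + lam • 1)
          = Wᵀ * (N⁻¹ * (W * (Wᵀ * W + lam • 1))) := by
            rw [Matrix.mul_assoc, Matrix.mul_assoc]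
      _ = Wᵀ * (N⁻¹ * (N * W)) := by rw [hpush']
      _ = Wᵀ * ((N⁻¹ * N) * W) := by rw [← Matrix.mul_assoc N⁻¹ N W]
      _ = Wᵀ * W := by rw [hN2, Matrix.one_mul]
    calc (lam⁻¹ • (1 - Wᵀ * (N⁻¹ * W))) * (Wᵀ * W + lam • 1)
        = lam⁻¹ • (1 * (Wᵀ * W + lam • 1) - (Wᵀ * (N⁻¹ * W)) * (Wᵀ * W + lam • 1)) := by
          rw [Matrix.smul_mul, Matrix.sub_mul]
    _ = lam⁻¹ • ((Wᵀ * W + lam • 1) - Wᵀ * W) := by rw [Matrix.one_mul, e]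
    _ = lam⁻¹ • (lam • (1 : Matrix (Fin d) (Fin d) ℝ)) := by rw [hA]
    _ = 1 := by rw [smul_smul, inv_mul_cancel₀ hlam, one_smul]
  exact mp_of_inv h1 h2

lemma frob {m n : ℕ} (X : Matrix (Fin m) (Fin n) ℝ) :
    ∑ i, ∑ j, (X i j) ^ 2 = Matrix.trace (X * Xᵀ) := by
  simp [Matrix.trace, Matrix.mul_apply, Matrix.diag, sq]

theorem kernelized_criterion {m d s : ℕ}
    (V : Matrix (Fin m) (Fin d) ℝ) (f : Fin s → Fin m) (hf : Function.Injective f)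
    (lam t : ℝ) (hlam : 0 ≤ lam) (ht : 0 ≤ t) :
    let VS : Matrix (Fin s) (Fin d) ℝ := V.submatrix f id
    let K : Matrix (Fin m) (Fin m) ℝ := V * Vᵀ
    let KSS : Matrix (Fin s) (Fin s) ℝ := VS * VSᵀ
    let KcolS : Matrix (Fin m) (Fin s) ℝ := V * VSᵀ
    let M : Matrix (Fin d) (Fin d) ℝ := VSᵀ * VS
    let P : Matrix (Fin d) (Fin d) ℝ := pinv (M + lam • 1)
    VS.rank = s → IsUnit (KSS + lam • 1).det →
    (∑ i, ∑ j, (((V * (1 - P * M) : Matrix (Fin m) (Fin d) ℝ)) i j) ^ 2)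
        + t * Matrix.trace (V * (P * P * M) * Vᵀ)
      = Matrix.trace K
        + Matrix.trace (KcolS *
            ((KSS + lam • 1)⁻¹ * ((-2 : ℝ) • 1 + KSS * (KSS + lam • 1)⁻¹)
              + t • ((KSS + lam • 1)⁻¹ * (KSS + lam • 1)⁻¹)) * KcolSᵀ) := by
  intro VS K KSS KcolS M P hrank hdet
  have hKSS : KSS = VS * VSᵀ := rfl
  have hM : M = VSᵀ * VS := rfl
  have hK : K = V * Vᵀ := rfl
  have hKcolS : KcolS = V * VSᵀ := rfl
  have hP : P = pinv (M + lam • 1) := rfl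
  set N : Matrix (Fin s) (Fin s) ℝ := KSS + lam • 1 with hNdef
  have hN1 : N * N⁻¹ = 1 := Matrix.mul_nonsing_inv _ hdet
  have hN2 : N⁻¹ * N = 1 := Matrix.nonsing_inv_mul _ hdet
  have hNT : Nᵀ = N := by
    rw [hNdef, hKSS]
    simp [Matrix.transpose_add, Matrix.transpose_smul, Matrix.transpose_mul,
      Matrix.transpose_one, Matrix.transpose_transpose]
  have hNiT : (N⁻¹)ᵀ = N⁻¹ := by rw [Matrix.transpose_nonsing_inv, hNT]
  have hPV : P * VSᵀ = VSᵀ * N⁻¹ := by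
    rcases eq_or_ne lam 0 with h0 | h0
    · have hA : M + lam • 1 = VSᵀ * VS := by rw [h0, zero_smul, add_zero, hM]
      have hNK : N = VS * VSᵀ := by rw [hNdef, hKSS, h0, zero_smul, add_zero]
      have hmp := mp_zero VS (by rw [← hNK]; exact hdet)
      have hPeq : P = VSᵀ * (N⁻¹ * (N⁻¹ * VS)) := by
        rw [hP, hA, ← hNK] at *
        rw [hNK] at hmp ⊢
        exact pinv_eq hmp
      rw [hPeq]
      simp only [Matrix.mul_assoc]
      rw [← hNK, hN2, Matrix.mul_one]
    · have hNK : N = VS * VSᵀ + lam • 1 := by rw [hNdef, hKSS]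
      have hmp := mp_lam VS h0 (by rw [← hNK]; exact hdet)
      have hPeq : P = lam⁻¹ • (1 - VSᵀ * (N⁻¹ * VS)) := by
        rw [hP, hM, pinv_eq hmp, ← hNK]
      rw [hPeq]
      have e : (VS * VSᵀ : Matrix (Fin s) (Fin s) ℝ) = N - lam • 1 := by
        rw [hNK]; exact (add_sub_cancel_right _ _).symm
      calc (lam⁻¹ • (1 - VSᵀ * (N⁻¹ * VS))) * VSᵀ
          = lam⁻¹ • (VSᵀ - VSᵀ * (N⁻¹ * (VS * VSᵀ))) := by
            rw [Matrix.smul_mul, Matrix.sub_mul, Matrix.one_mul, Matrix.mul_assoc,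
              Matrix.mul_assoc]
      _ = lam⁻¹ • (VSᵀ - VSᵀ * (N⁻¹ * (N - lam • 1))) := by rw [e]
      _ = lam⁻¹ • (VSᵀ - VSᵀ * (N⁻¹ * N - lam • N⁻¹)) := by
            rw [Matrix.mul_sub, Matrix.mul_smul, Matrix.mul_one]
      _ = lam⁻¹ • (VSᵀ - (VSᵀ - lam • (VSᵀ * N⁻¹))) := by
            rw [hN2, Matrix.mul_sub, Matrix.mul_one, Matrix.mul_smul]
      _ = lam⁻¹ • (lam • (VSᵀ * N⁻¹)) := by rw [sub_sub_cancel]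
      _ = VSᵀ * N⁻¹ := by rw [smul_smul, inv_mul_cancel₀ h0, one_smul]
  have hPM : P * M = VSᵀ * (N⁻¹ * VS) := by
    rw [hM, ← Matrix.mul_assoc, hPV, Matrix.mul_assoc]
  have hPPM : P * P * M = VSᵀ * (N⁻¹ * (N⁻¹ * VS)) := by
    rw [Matrix.mul_assoc, hPM, ← Matrix.mul_assoc, hPV]
    simp only [Matrix.mul_assoc]
  rw [hPPM, hPM, hK, hKcolS, hKSS, frob]
  simp only [Matrix.transpose_mul, Matrix.transpose_sub, Matrix.transpose_one,
    Matrix.transpose_transpose, hNiT]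
  simp only [Matrix.mul_add, Matrix.add_mul, Matrix.mul_sub, Matrix.sub_mul,
    Matrix.mul_assoc, Matrix.mul_one, Matrix.one_mul, Matrix.smul_mul, Matrix.mul_smul,
    Matrix.trace_add, Matrix.trace_sub, Matrix.trace_smul, smul_eq_mul]
  ring
end
end
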